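/- Let F : ℝ^d → ℝ be differentiable and β-smooth with a non-empty set of global minimizers W*, let F* = min F, and for each w let w* denote a Euclidean projection of w onto W*. Then: (i) if F is μ-strongly convex then F satisfies weak strong convexity with μ, i.e. F* − F(w) ≥ ∇F(w)ᵀ(w* − w) + (μ/2)‖w* − w‖² for all w; (ii) weak strong convexity with μ implies the restricted secant inequality with μ/2, i.e. ∇F(w)ᵀ(w − w*) ≥ (μ/2)‖w − w*‖²; (iii) the restricted secant inequality with μ implies the error bound with μ, i.e. ‖∇F(w)‖ ≥ μ‖w − w*‖; (iv) the error bound with μ together with β-smoothness implies the Polyak–Łojasiewicz (PL) inequality F(w) − F* ≤ (β/(2μ²))‖∇F(w)‖²; (v) the PL condition with μ (F(w) − F* ≤ (1/(2μ))‖∇F(w)‖²) implies both the quadratic growth condition F(w) − F* ≥ (μ/2)‖w − w*‖² and the error bound ‖∇F(w)‖ ≥ μ‖w − w*‖; (vi) if F is convex and satisfies quadratic growth with μ, then F(w) − F* ≤ (2/μ)‖∇F(w)‖² for all w, i.e. F satisfies PL with parameter μ/4. -/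

import Mathlib

open MeasureTheory Finset
open scoped ENNReal NNReal

noncomputable section

universe u

/-- `ℝ^d` with the Euclidean structure. -/
abbrev Vec (d : ℕ) : Type := EuclideanSpace ℝ (Fin d)

/-- Population risk `F(w) = E_{z ∼ ρ} [f(w,z)]`. -/
def popRisk {d : ℕ} {Z : Type u} [MeasurableSpace Z] (ρ : Measure Z)
    (f : Vec d → Z → ℝ) (w : Vec d) : ℝ :=
  ∫ z, f w z ∂ρ

/-- Empirical risk `F_S(w) = (1/n) ∑_{i=1}^n f(w, z_i)`. -/
def empRisk {d n : ℕ} {Z : Type u} (f : Vec d → Z → ℝ) (S : Fin n → Z) (w : Vec d) : ℝ :=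
  (∑ i, f w (S i)) / (n : ℝ)

/-- Quadratic growth condition on `W` with parameter `μ`:  for every `w ∈ W` there is a
(Euclidean-projection) minimizer `p` of `g` on `W` with `g w - g p ≥ (μ/2)‖w - p‖²`.
(Since all minimizers have the same value, this is equivalent to the formulation with the
closest minimizer `π(w)`.) -/
def QuadGrowthOn {d : ℕ} (g : Vec d → ℝ) (W : Set (Vec d)) (μ : ℝ) : Prop :=
  ∀ w ∈ W, ∃ p ∈ W, IsMinOn g W p ∧ μ / 2 * ‖w - p‖ ^ 2 ≤ g w - g p

/-- Polyak–Łojasiewicz condition with parameter `μ`: `g(w) - inf g ≤ ‖∇g(w)‖²/(2μ)` for all `w`. -/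
def PLCond {d : ℕ} (g : Vec d → ℝ) (μ : ℝ) : Prop :=
  ∀ w, g w - (⨅ v, g v) ≤ 1 / (2 * μ) * ‖gradient g w‖ ^ 2

/-- Polyak–Łojasiewicz condition on a set `W`. -/
def PLOnSet {d : ℕ} (g : Vec d → ℝ) (W : Set (Vec d)) (μ : ℝ) : Prop :=
  ∀ w ∈ W, g w - sInf (g '' W) ≤ 1 / (2 * μ) * ‖gradient g w‖ ^ 2

/-- SGD iterates: `w₁ = 0` and `w_{t+1} = w_t - η_t ∇f(w_t, z_{j_t})` for `t ≥ 1`. -/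
def sgd {d n : ℕ} {Z : Type u} (f : Vec d → Z → ℝ) (S : Fin n → Z)
    (η : ℕ → ℝ) (j : ℕ → Fin n) : ℕ → Vec d
  | 0 => 0
  | 1 => 0
  | t + 2 =>
      sgd f S η j (t + 1) -
        η (t + 1) • gradient (fun w => f w (S (j (t + 1)))) (sgd f S η j (t + 1))

/-- The indices `j_0, j_1, j_2, …` are drawn independently and uniformly from `{1,…,n}`:
cylinder-set characterization of the infinite product of uniform measures on `Fin n`. -/
def IsUniformIndexMeasure {n : ℕ} (μJ : Measure (ℕ → Fin n)) : Prop :=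
  IsProbabilityMeasure μJ ∧
    ∀ (s : Finset ℕ) (g : ℕ → Fin n),
      μJ {j | ∀ t ∈ s, j t = g t} = (1 / (n : ℝ≥0∞)) ^ s.card

section Helpers
open InnerProductSpace Set

variable {d : ℕ}

/-- directional derivative along a line -/
lemma hasDerivAt_line (F : Vec d → ℝ) (hdiff : Differentiable ℝ F) (x v : Vec d) (t : ℝ) :
    HasDerivAt (fun s : ℝ => F (x + s • v)) (inner ℝ (gradient F (x + t • v)) v : ℝ) t := by
  have hline : HasDerivAt (fun s : ℝ => x + s • v) v t := by
    simpa using ((hasDerivAt_id t).smul_const v).const_add x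
  have hF := ((hdiff (x + t • v)).hasGradientAt).hasFDerivAt
  have := hF.comp_hasDerivAt t hline
  rw [InnerProductSpace.toDual_apply_apply] at this
  exact this

/-- gradient vanishes at a global minimum -/
lemma gradient_eq_zero_of_min (F : Vec d → ℝ) {p : Vec d} (hp : ∀ v, F p ≤ F v) :
    gradient F p = 0 := by
  have hmin : IsLocalMin F p := Filter.Eventually.of_forall hp
  have := hmin.fderiv_eq_zero
  simp [gradient, this]

/-- descent lemma: β-smooth gives a quadratic upper bound -/
lemma descent_lemma (F : Vec d → ℝ) (β : ℝ) (hβ : 0 < β) (hdiff : Differentiable ℝ F)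
    (hsmooth : ∀ w₁ w₂, ‖gradient F w₁ - gradient F w₂‖ ≤ β * ‖w₁ - w₂‖) (x y : Vec d) :
    F y ≤ F x + (inner ℝ (gradient F x) (y - x) : ℝ) + β / 2 * ‖y - x‖ ^ 2 := by
  set v := y - x with hv
  set g : ℝ → ℝ := fun t =>
    F (x + t • v) - t * (inner ℝ (gradient F x) v : ℝ) - β / 2 * t ^ 2 * ‖v‖ ^ 2 with hg
  have hderiv : ∀ t : ℝ, HasDerivAt g
      ((inner ℝ (gradient F (x + t • v)) v : ℝ) - (inner ℝ (gradient F x) v : ℝ)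
        - β * t * ‖v‖ ^ 2) t := by
    intro t
    have h1 := hasDerivAt_line F hdiff x v t
    have h2 : HasDerivAt (fun s : ℝ => s * (inner ℝ (gradient F x) v : ℝ))
        (inner ℝ (gradient F x) v : ℝ) t := by
      simpa using (hasDerivAt_id t).mul_const (inner ℝ (gradient F x) v : ℝ)
    have h3 : HasDerivAt (fun s : ℝ => β / 2 * s ^ 2 * ‖v‖ ^ 2)
        (β * t * ‖v‖ ^ 2) t := by
      have := ((hasDerivAt_pow 2 t).const_mul (β / 2)).mul_const (‖v‖ ^ 2)
      refine this.congr_deriv ?_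
      rw [show (2:ℕ) - 1 = 1 from rfl]
      ring
    exact (h1.sub h2).sub h3
  have hanti : AntitoneOn g (Icc 0 1) := by
    apply antitoneOn_of_deriv_nonpos (convex_Icc 0 1)
    · exact Continuous.continuousOn (by
        have : Continuous fun t : ℝ => F (x + t • v) :=
          hdiff.continuous.comp (by continuity)
        rw [hg]
        exact (this.sub (by fun_prop)).sub (by fun_prop))
    · intro t ht
      exact (hderiv t).differentiableAt.differentiableWithinAt
    · intro t ht
      rw [interior_Icc] at ht
      rw [(hderiv t).deriv]
      have hCS : (inner ℝ (gradient F (x + t • v)) v : ℝ) - (inner ℝ (gradient F x) v : ℝ)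
          ≤ ‖gradient F (x + t • v) - gradient F x‖ * ‖v‖ := by
        rw [← inner_sub_left]
        exact real_inner_le_norm _ _
      have hL : ‖gradient F (x + t • v) - gradient F x‖ ≤ β * (t * ‖v‖) := by
        have := hsmooth (x + t • v) x
        simpa [norm_smul, abs_of_pos ht.1, mul_assoc] using this
      nlinarith [norm_nonneg v, mul_le_mul_of_nonneg_right hL (norm_nonneg v), ht.1.le, ht.2.le]
  have h01 := hanti (by simp : (0:ℝ) ∈ Icc (0:ℝ) 1) (by simp : (1:ℝ) ∈ Icc (0:ℝ) 1) zero_le_one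
  have hx0 : x + (0:ℝ) • v = x := by simp
  have hx1 : x + (1:ℝ) • v = y := by simp [hv]
  simp only [hg, hx0, hx1] at h01
  nlinarith [h01]

/-- right slope bound passes to the derivative -/
lemma le_deriv_of_slope {φ : ℝ → ℝ} {m C δ : ℝ} (hδ : 0 < δ) (hd : HasDerivAt φ m 0)
    (hs : ∀ t, t ∈ Ioo 0 δ → C ≤ (φ t - φ 0) / t) : C ≤ m := by
  have htend : Filter.Tendsto (slope φ 0) (nhdsWithin 0 (Ioi 0)) (nhds m) :=
    (hasDerivAt_iff_tendsto_slope.1 hd).mono_left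
      (nhdsWithin_mono 0 (by intro t ht; exact ne_of_gt ht))
  refine ge_of_tendsto htend ?_
  filter_upwards [Ioo_mem_nhdsGT_of_mem (by simp [hδ] : (0:ℝ) ∈ Ico 0 δ)] with t ht
  simpa [slope_def_field, div_eq_iff, sub_zero] using hs t ht

/-- local linear lower bound controls the gradient norm -/
lemma grad_norm_le_of_local_lower (F : Vec d → ℝ) (hdiff : Differentiable ℝ F)
    {v : Vec d} {K δ : ℝ} (hδ : 0 < δ)
    (hK : 0 ≤ K)
    (hlow : ∀ u, ‖u - v‖ < δ → F v - K * ‖u - v‖ ≤ F u) :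
    ‖gradient F v‖ ≤ K := by
  set g := gradient F v with hgdef
  rcases eq_or_ne g 0 with h0 | h0
  · simp [h0, hK]
  · set e : Vec d := -(‖g‖⁻¹ • g) with he
    have hne : ‖e‖ = 1 := by
      simp [he, norm_smul, abs_of_nonneg (inv_nonneg.2 (norm_nonneg g)),
        inv_mul_cancel₀ (norm_ne_zero_iff.2 h0)]
    have hd := hasDerivAt_line F hdiff v e 0
    simp only [zero_smul, add_zero] at hd
    have hinner : (inner ℝ g e : ℝ) = -‖g‖ := by
      have hs : (inner ℝ g g : ℝ) = ‖g‖ ^ 2 := real_inner_self_eq_norm_sq g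
      rw [he, inner_neg_right, inner_smul_right, hs, pow_two, ← mul_assoc,
        inv_mul_cancel₀ (norm_ne_zero_iff.2 h0), one_mul]
    have hslope : ∀ t, t ∈ Ioo 0 δ → -K ≤ ((fun s : ℝ => F (v + s • e)) t
        - (fun s : ℝ => F (v + s • e)) 0) / t := by
      intro t ht
      have hnorm : ‖(v + t • e) - v‖ = t := by
        simp [norm_smul, hne, abs_of_pos ht.1]
      have := hlow (v + t • e) (by rw [hnorm]; exact ht.2)
      rw [hnorm] at this
      simp only [zero_smul, add_zero]
      rw [le_div_iff₀ ht.1]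
      linarith
    have := le_deriv_of_slope hδ hd hslope
    rw [hinner] at this
    linarith

/-- left version: derivative bounded by right slopes -/
lemma deriv_le_of_slope {φ : ℝ → ℝ} {m C δ : ℝ} (hδ : 0 < δ) (hd : HasDerivAt φ m 0)
    (hs : ∀ t, t ∈ Ioo 0 δ → (φ t - φ 0) / t ≤ C) : m ≤ C := by
  have key : -C ≤ -m := by
    refine le_deriv_of_slope (φ := fun t => -φ t) hδ hd.neg ?_
    intro t ht
    have h1 := hs t ht
    rw [div_le_iff₀ ht.1] at h1
    rw [le_div_iff₀ ht.1]
    linarith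
  linarith

/-- first-order condition for convexity -/
lemma convex_first_order (F : Vec d → ℝ) (hdiff : Differentiable ℝ F)
    (hconv : ConvexOn ℝ Set.univ F) (x y : Vec d) :
    F x + (inner ℝ (gradient F x) (y - x) : ℝ) ≤ F y := by
  set v := y - x with hv
  have hd := hasDerivAt_line F hdiff x v 0
  simp only [zero_smul, add_zero] at hd
  have key : (inner ℝ (gradient F x) v : ℝ) ≤ F y - F x := by
    refine deriv_le_of_slope one_pos hd ?_
    intro t ht
    have hcomb : x + t • v = (1 - t) • x + t • y := by
      rw [hv]; module
    have := hconv.2 (mem_univ x) (mem_univ y) (by linarith [ht.2] : (0:ℝ) ≤ 1 - t)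
      ht.1.le (by ring)
    rw [← hcomb] at this
    simp only [smul_eq_mul] at this
    rw [div_le_iff₀ ht.1]
    simp only [zero_smul, add_zero]
    nlinarith
  linarith

/-- key step for PL ⇒ quadratic growth: find a nearby minimizer -/
lemma pl_nearby_min (F : Vec d → ℝ) (hdiff : Differentiable ℝ F) (Fstar : ℝ)
    (hFs : ∀ v, Fstar ≤ F v) {μ : ℝ} (hμ : 0 < μ)
    (hPL : ∀ w, F w - Fstar ≤ 1 / (2 * μ) * ‖gradient F w‖ ^ 2)
    (w : Vec d) {c' : ℝ} (hc0 : 0 < c') (hc : c' ^ 2 < μ / 2) :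
    ∃ v, F v = Fstar ∧ ‖w - v‖ ≤ Real.sqrt (F w - Fstar) / c' := by
  set a := Real.sqrt (F w - Fstar) with ha
  clear_value a
  have hε0 : 0 ≤ F w - Fstar := by linarith [hFs w]
  rcases eq_or_lt_of_le hε0 with hε | hε
  · exact ⟨w, by linarith, by simp [ha]; positivity⟩
  · set r := a / c' with hr
    have ha0 : 0 < a := ha ▸ Real.sqrt_pos.2 hε
    have hr0 : 0 < r := div_pos ha0 hc0
    set φ : Vec d → ℝ := fun u => Real.sqrt (F u - Fstar) + c' * ‖u - w‖ with hφ
    clear_value φ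
    have hφcont : Continuous φ := by
      rw [hφ]
      apply Continuous.add
      · exact Real.continuous_sqrt.comp (hdiff.continuous.sub continuous_const)
      · exact continuous_const.mul ((continuous_id.sub continuous_const).norm)
    obtain ⟨v, hvK, hmin⟩ := (isCompact_closedBall w r).exists_isMinOn
      ⟨w, Metric.mem_closedBall_self hr0.le⟩ hφcont.continuousOn
    have hφw : φ w = a := by rw [hφ]; simp [ha]
    have hφv : φ v ≤ a := by
      have := hmin (Metric.mem_closedBall_self hr0.le)
      simpa [hφw] using this
    have hεv0 : 0 ≤ F v - Fstar := by linarith [hFs v]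
    rcases eq_or_lt_of_le hεv0 with hεv | hεv
    · refine ⟨v, by linarith, ?_⟩
      have : dist v w ≤ r := Metric.mem_closedBall.1 hvK
      rw [dist_eq_norm] at this
      rw [norm_sub_rev]
      exact this
    · exfalso
      set sv := Real.sqrt (F v - Fstar) with hsv
      clear_value sv
      have hsv0 : 0 < sv := hsv ▸ Real.sqrt_pos.2 hεv
      have hsvsq : sv ^ 2 = F v - Fstar := hsv ▸ Real.sq_sqrt hεv0
      have hvint : ‖v - w‖ < r := by
        have h1 : sv + c' * ‖v - w‖ ≤ a := by rw [hsv, hφ] at *; exact hφv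
        rw [hr]
        rw [lt_div_iff₀ hc0]
        nlinarith
      set δ := r - ‖v - w‖ with hδdef
      clear_value δ
      have hδ0 : 0 < δ := by linarith
      have hlow : ∀ u, ‖u - v‖ < δ → F v - (2 * c' * sv) * ‖u - v‖ ≤ F u := by
        intro u hu
        have huK : u ∈ Metric.closedBall w r := by
          rw [Metric.mem_closedBall, dist_eq_norm]
          calc ‖u - w‖ ≤ ‖u - v‖ + ‖v - w‖ := norm_sub_le_norm_sub_add_norm_sub u v w
            _ ≤ r := by linarith [hu.le]
        have hφu : φ v ≤ φ u := hmin huK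
        have htri : ‖v - w‖ - ‖u - w‖ ≤ ‖v - u‖ := by
          have := norm_sub_le_norm_sub_add_norm_sub v u w
          linarith
        have hq : sv - c' * ‖u - v‖ ≤ Real.sqrt (F u - Fstar) := by
          rw [hφ] at hφu
          have h2 : sv + c' * ‖v - w‖ ≤ Real.sqrt (F u - Fstar) + c' * ‖u - w‖ := by
            rw [hsv]; exact hφu
          have htri2 : ‖u - w‖ - ‖v - w‖ ≤ ‖u - v‖ := by
            linarith [norm_sub_le_norm_sub_add_norm_sub u v w]
          have hmul := mul_le_mul_of_nonneg_left htri2 hc0.le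
          rw [mul_sub] at hmul
          linarith
        have hεu0 : 0 ≤ F u - Fstar := by linarith [hFs u]
        have hqsq : Real.sqrt (F u - Fstar) ^ 2 = F u - Fstar := Real.sq_sqrt hεu0
        have hq0 : 0 ≤ Real.sqrt (F u - Fstar) := Real.sqrt_nonneg _
        rcases le_or_gt sv (c' * ‖u - v‖) with hcase | hcase
        · nlinarith [norm_nonneg (u - v)]
        · have h3 : (sv - c' * ‖u - v‖) ^ 2 ≤ Real.sqrt (F u - Fstar) ^ 2 :=
            pow_le_pow_left₀ (by linarith) hq 2
          nlinarith [norm_nonneg (u - v), sq_nonneg (c' * ‖u - v‖)]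
      have hgrad : ‖gradient F v‖ ≤ 2 * c' * sv :=
        grad_norm_le_of_local_lower F hdiff hδ0 (by positivity) hlow
      have hgsq : ‖gradient F v‖ ^ 2 ≤ (2 * c' * sv) ^ 2 :=
        pow_le_pow_left₀ (norm_nonneg _) hgrad 2
      have hplv := hPL v
      have h4 : F v - Fstar ≤ 1 / (2 * μ) * (2 * c' * sv) ^ 2 := by
        calc F v - Fstar ≤ 1 / (2 * μ) * ‖gradient F v‖ ^ 2 := hplv
          _ ≤ 1 / (2 * μ) * (2 * c' * sv) ^ 2 := by
              apply mul_le_mul_of_nonneg_left hgsq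
              positivity
      rw [← hsvsq] at h4
      have h5 : 1 / (2 * μ) * (2 * c' * sv) ^ 2 = (2 * c' ^ 2 / μ) * sv ^ 2 := by
        field_simp
      rw [h5] at h4
      have hsvsq0 : 0 < sv ^ 2 := by positivity
      have h6 : 1 ≤ 2 * c' ^ 2 / μ := by
        by_contra h
        push_neg at h
        have hx := mul_lt_mul_of_pos_right h hsvsq0
        rw [one_mul] at hx
        linarith
      have h7 : μ ≤ 2 * c' ^ 2 := by
        rw [le_div_iff₀ hμ, one_mul] at h6
        exact h6
      linarith


end Helpers

open InnerProductSpace Set in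
/-- Relations between curvature conditions: strong convexity ⇒ weak
strong convexity ⇒ restricted secant inequality ⇒ error bound ⇔ PL ⇒ quadratic growth, and
for convex functions quadratic growth ⇒ PL. -/
theorem statement18 {d : ℕ} (F : Vec d → ℝ) (β : ℝ) (hβ : 0 < β)
    (hdiff : Differentiable ℝ F)
    (hsmooth : ∀ w₁ w₂, ‖gradient F w₁ - gradient F w₂‖ ≤ β * ‖w₁ - w₂‖)
    (Wstar : Set (Vec d)) (hWstar : Wstar = {w | ∀ v, F w ≤ F v})
    (hne : Wstar.Nonempty) (hcl : IsClosed Wstar)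
    (Fstar : ℝ) (hFstar : Fstar = ⨅ w, F w)
    (proj : Vec d → Vec d)
    (hproj : ∀ w, proj w ∈ Wstar ∧ ∀ q ∈ Wstar, ‖w - proj w‖ ≤ ‖w - q‖)
    (μ : ℝ) (hμ : 0 < μ) :
    ((∀ w₁ w₂, F w₁ - F w₂ ≥
        (inner ℝ (gradient F w₂) (w₁ - w₂) : ℝ) + μ / 2 * ‖w₁ - w₂‖ ^ 2) →
      ∀ w, Fstar - F w ≥
        (inner ℝ (gradient F w) (proj w - w) : ℝ) + μ / 2 * ‖proj w - w‖ ^ 2) ∧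
    ((∀ w, Fstar - F w ≥
        (inner ℝ (gradient F w) (proj w - w) : ℝ) + μ / 2 * ‖proj w - w‖ ^ 2) →
      ∀ w, (inner ℝ (gradient F w) (w - proj w) : ℝ) ≥ μ / 2 * ‖w - proj w‖ ^ 2) ∧
    ((∀ w, (inner ℝ (gradient F w) (w - proj w) : ℝ) ≥ μ * ‖w - proj w‖ ^ 2) →
      ∀ w, ‖gradient F w‖ ≥ μ * ‖w - proj w‖) ∧
    ((∀ w, ‖gradient F w‖ ≥ μ * ‖w - proj w‖) →
      ∀ w, F w - Fstar ≤ β / (2 * μ ^ 2) * ‖gradient F w‖ ^ 2) ∧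
    ((∀ w, F w - Fstar ≤ 1 / (2 * μ) * ‖gradient F w‖ ^ 2) →
      (∀ w, F w - Fstar ≥ μ / 2 * ‖w - proj w‖ ^ 2) ∧
      (∀ w, ‖gradient F w‖ ≥ μ * ‖w - proj w‖)) ∧
    ((ConvexOn ℝ Set.univ F ∧ ∀ w, F w - Fstar ≥ μ / 2 * ‖w - proj w‖ ^ 2) →
      ∀ w, F w - Fstar ≤ 2 / μ * ‖gradient F w‖ ^ 2) := by
  have hminproj : ∀ w, ∀ v, F (proj w) ≤ F v := by
    intro w
    have := (hproj w).1
    rw [hWstar] at this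
    exact this
  have hFs : ∀ v, Fstar ≤ F v := by
    intro v
    obtain ⟨p0, hp0⟩ := hne
    rw [hWstar] at hp0
    have hbdd : BddBelow (Set.range F) := ⟨F p0, by rintro y ⟨u, rfl⟩; exact hp0 u⟩
    rw [hFstar]
    exact ciInf_le hbdd v
  have hFeq : ∀ p, (∀ v, F p ≤ F v) → F p = Fstar :=
    fun p hp => le_antisymm (hFstar ▸ le_ciInf hp) (hFs p)
  refine ⟨?_, ?_, ?_, ?_, ?_, ?_⟩
  · -- (i) strong convexity ⇒ weak strong convexity
    intro hsc w
    have h := hsc (proj w) w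
    have he : F (proj w) = Fstar := hFeq _ (hminproj w)
    rw [← he]
    exact h
  · -- (ii) WSC ⇒ RSI
    intro hwsc w
    have h := hwsc w
    have e1 : (inner ℝ (gradient F w) (proj w - w) : ℝ)
        = -(inner ℝ (gradient F w) (w - proj w) : ℝ) := by
      rw [← neg_sub w (proj w), inner_neg_right]
    have e2 : ‖proj w - w‖ = ‖w - proj w‖ := norm_sub_rev _ _
    rw [e1, e2] at h
    have := hFs w
    linarith
  · -- (iii) RSI ⇒ EB
    intro hrsi w
    have h := hrsi w
    have hcs := real_inner_le_norm (gradient F w) (w - proj w)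
    rcases eq_or_lt_of_le (norm_nonneg (w - proj w)) with h0 | h0
    · rw [← h0]
      simpa using norm_nonneg (gradient F w)
    · nlinarith
  · -- (iv) EB ⇒ PL
    intro heb w
    have hds := descent_lemma F β hβ hdiff hsmooth (proj w) w
    have hg0 : gradient F (proj w) = 0 := gradient_eq_zero_of_min F (hminproj w)
    rw [hg0, inner_zero_left] at hds
    have he : F (proj w) = Fstar := hFeq _ (hminproj w)
    rw [he] at hds
    have hsq : (μ * ‖w - proj w‖) ^ 2 ≤ ‖gradient F w‖ ^ 2 :=
      pow_le_pow_left₀ (by positivity) (heb w) 2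
    have key : β / (2 * μ ^ 2) * (μ * ‖w - proj w‖) ^ 2 = β / 2 * ‖w - proj w‖ ^ 2 := by
      field_simp
    calc F w - Fstar ≤ β / 2 * ‖w - proj w‖ ^ 2 := by linarith
      _ = β / (2 * μ ^ 2) * (μ * ‖w - proj w‖) ^ 2 := key.symm
      _ ≤ β / (2 * μ ^ 2) * ‖gradient F w‖ ^ 2 := by
          apply mul_le_mul_of_nonneg_left hsq
          positivity
  · -- (v) PL ⇒ QG and EB
    intro hpl
    have hQG : ∀ w, F w - Fstar ≥ μ / 2 * ‖w - proj w‖ ^ 2 := by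
      intro w
      set c := Real.sqrt (μ / 2) with hcdef
      have hc0 : 0 < c := Real.sqrt_pos.2 (by linarith)
      have hc2 : c ^ 2 = μ / 2 := Real.sq_sqrt (by linarith)
      set D := ‖w - proj w‖ with hD
      set a := Real.sqrt (F w - Fstar) with ha
      have hD0 : 0 ≤ D := norm_nonneg _
      have ha0 : 0 ≤ a := Real.sqrt_nonneg _
      have key : ∀ c', 0 < c' → c' < c → c' * D ≤ a := by
        intro c' h1 h2
        have hcsq' : c' ^ 2 < μ / 2 := by nlinarith
        obtain ⟨v, hv, hvd⟩ := pl_nearby_min F hdiff Fstar hFs hμ hpl w h1 hcsq'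
        have hvW : v ∈ Wstar := by
          rw [hWstar]
          intro u
          rw [hv]
          exact hFs u
        have hDle : D ≤ a / c' := le_trans ((hproj w).2 v hvW) hvd
        rw [le_div_iff₀ h1] at hDle
        linarith [hDle]
      have hcD : c * D ≤ a := by
        rcases eq_or_lt_of_le hD0 with h0 | h0
        · rw [← h0]
          simpa using ha0
        · by_contra hlt
          push_neg at hlt
          have hadD : a / D < c := by
            rw [div_lt_iff₀ h0]
            nlinarith
          have hadD0 : 0 ≤ a / D := by positivity
          have h1 : 0 < (a / D + c) / 2 := by linarith
          have h2 : (a / D + c) / 2 < c := by linarith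
          have h3 := key _ h1 h2
          rw [show (a / D + c) / 2 * D = (a / D * D + c * D) / 2 by ring] at h3
          rw [div_mul_cancel₀ a (ne_of_gt h0)] at h3
          linarith
      have hsq : (c * D) ^ 2 ≤ a ^ 2 := pow_le_pow_left₀ (by positivity) hcD 2
      have ha2 : a ^ 2 = F w - Fstar := Real.sq_sqrt (by linarith [hFs w])
      nlinarith [hsq]
    refine ⟨hQG, ?_⟩
    intro w
    have h1 := hQG w
    have h2 := hpl w
    have hsq : (μ * ‖w - proj w‖) ^ 2 ≤ ‖gradient F w‖ ^ 2 := by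
      have : μ / 2 * ‖w - proj w‖ ^ 2 ≤ 1 / (2 * μ) * ‖gradient F w‖ ^ 2 := le_trans h1 h2
      have h3 := mul_le_mul_of_nonneg_left this (by positivity : (0:ℝ) ≤ 2 * μ)
      calc (μ * ‖w - proj w‖) ^ 2 = 2 * μ * (μ / 2 * ‖w - proj w‖ ^ 2) := by ring
        _ ≤ 2 * μ * (1 / (2 * μ) * ‖gradient F w‖ ^ 2) := h3
        _ = ‖gradient F w‖ ^ 2 := by field_simp
    exact le_of_pow_le_pow_left₀ two_ne_zero (norm_nonneg _) hsq
  · -- (vi) convex + QG ⇒ PL (weaker constant)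
    rintro ⟨hconv, hqg⟩ w
    have hfo := convex_first_order F hdiff hconv w (proj w)
    have he : F (proj w) = Fstar := hFeq _ (hminproj w)
    rw [he] at hfo
    have e1 : (inner ℝ (gradient F w) (proj w - w) : ℝ)
        = -(inner ℝ (gradient F w) (w - proj w) : ℝ) := by
      rw [← neg_sub w (proj w), inner_neg_right]
    rw [e1] at hfo
    have hcs := real_inner_le_norm (gradient F w) (w - proj w)
    have h1 : F w - Fstar ≤ ‖gradient F w‖ * ‖w - proj w‖ := by linarith
    have h2 := hqg w
    have hε0 := hFs w
    rcases eq_or_lt_of_le (show (0:ℝ) ≤ F w - Fstar by linarith) with h0 | h0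
    · rw [← h0]
      positivity
    · have hgoal : (F w - Fstar) * μ ≤ 2 * ‖gradient F w‖ ^ 2 := by
        nlinarith [mul_le_mul h1 h1 h0.le (by positivity),
          mul_le_mul_of_nonneg_left h2 (sq_nonneg ‖gradient F w‖),
          sq_nonneg (‖gradient F w‖ * ‖w - proj w‖)]
      rw [show 2 / μ * ‖gradient F w‖ ^ 2 = 2 * ‖gradient F w‖ ^ 2 / μ by ring,
        le_div_iff₀ hμ]
      linarith

end
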